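/- Let n ≥ 3, 1 ≤ p ≤ n−2, and λ ∈ ℝ with λ > (n−2)/2. Then ∫_{Ω_n} e^{−2x₁}·Q_{1,n−1}(x)^{λ−n/2} dx = ( ∫_{B^p} (1−‖v‖²)^{λ−n/2} dv ) · ( ∫_{Ω_{n−p}} e^{−2y₁}·Q_{1,n−p−1}(y)^{λ−(n−p)/2} dy ), all integrals with respect to Lebesgue measure, and all three integrals are finite. -/

import Mathlib

open MeasureTheory Finset
open scoped ENNReal

noncomputable section

/-- The Lorentz quadratic form `Q_{1,m-1}(x) = x₁² - x₂² - ⋯ - x_m²`. -/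
def Qform {m : ℕ} (x : Fin m → ℝ) : ℝ :=
  ∑ i : Fin m, (if (i : ℕ) = 0 then (1 : ℝ) else -1) * x i ^ 2

/-- The Lorentz cone `Ω_m = {x : x₁ > 0, Q_{1,m-1}(x) > 0}`. -/
def coneΩ (m : ℕ) : Set (Fin m → ℝ) :=
  {x | 0 < Qform x ∧ ∀ i : Fin m, (i : ℕ) = 0 → 0 < x i}

/-- The open unit ball in `ℝ^p`. -/
def ballB (p : ℕ) : Set (Fin p → ℝ) := {v | ∑ i, v i ^ 2 < 1}

/-! ### Auxiliary definitions -/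

/-- `posRpow c μ = c^μ` if `c > 0`, else `0`. -/
def posRpow (c : ℝ) (μ : ℝ) : ℝ≥0∞ :=
  if 0 < c then ENNReal.ofReal (c ^ μ) else 0

/-- Weight `e^{-2 x₀}` restricted to `x₀ > 0`. -/
def gweight {m : ℕ} (x : Fin m → ℝ) : ℝ≥0∞ :=
  if h : 0 < m then
    (if 0 < x ⟨0, h⟩ then ENNReal.ofReal (Real.exp (-2 * x ⟨0, h⟩)) else 0)
  else 0

/-- The global ball integral. -/
def ballL (q : ℕ) (μ : ℝ) : ℝ≥0∞ :=
  ∫⁻ v : Fin q → ℝ, posRpow (1 - ∑ i, v i ^ 2) μ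

/-! ### Measurability lemmas -/

lemma measurable_posRpow {α : Type*} [MeasurableSpace α] {h : α → ℝ}
    (hh : Measurable h) (μ : ℝ) : Measurable fun x => posRpow (h x) μ := by
  unfold posRpow
  refine Measurable.ite (measurableSet_lt measurable_const hh) ?_ measurable_const
  exact ENNReal.measurable_ofReal.comp (by measurability)

lemma measurable_qform {m : ℕ} : Measurable (Qform (m := m)) := by
  unfold Qform
  exact Finset.measurable_sum _ fun i _ =>
    ((measurable_pi_apply i).pow_const 2).const_mul _

lemma measurable_gweight {m : ℕ} : Measurable (gweight (m := m)) := by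
  unfold gweight
  by_cases h : 0 < m
  · simp only [dif_pos h]
    refine Measurable.ite (measurableSet_lt measurable_const (measurable_pi_apply _)) ?_
      measurable_const
    exact ENNReal.measurable_ofReal.comp (by measurability)
  · simp only [dif_neg h]; exact measurable_const

lemma measurable_sumsq {q : ℕ} : Measurable fun v : Fin q → ℝ => ∑ i, v i ^ 2 :=
  Finset.measurable_sum _ fun i _ => (measurable_pi_apply i).pow_const 2

/-! ### Simple `posRpow` lemmas -/

lemma posRpow_of_nonpos {c : ℝ} (hc : c ≤ 0) (μ : ℝ) : posRpow c μ = 0 := by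
  simp [posRpow, not_lt.2 hc]

lemma posRpow_of_pos {c : ℝ} (hc : 0 < c) (μ : ℝ) :
    posRpow c μ = ENNReal.ofReal (c ^ μ) := by simp [posRpow, hc]

lemma posRpow_mul_left {c d : ℝ} (hc : 0 < c) (μ : ℝ) :
    posRpow (c * d) μ = ENNReal.ofReal (c ^ μ) * posRpow d μ := by
  rcases lt_or_ge 0 d with hd | hd
  · rw [posRpow_of_pos (mul_pos hc hd), posRpow_of_pos hd,
      Real.mul_rpow hc.le hd.le, ENNReal.ofReal_mul (Real.rpow_nonneg hc.le μ)]
  · rw [posRpow_of_nonpos (mul_nonpos_of_nonneg_of_nonpos hc.le hd),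
      posRpow_of_nonpos hd, mul_zero]

/-! ### The scaling (inner) lemma -/

lemma lintegral_comp_smul_pi {q : ℕ} (f : (Fin q → ℝ) → ℝ≥0∞) (hf : Measurable f)
    {r : ℝ} (hr : 0 < r) :
    ∫⁻ v : Fin q → ℝ, f (r • v) = ENNReal.ofReal ((r ^ q)⁻¹) * ∫⁻ x, f x := by
  have hmap := Measure.map_addHaar_smul (volume : Measure (Fin q → ℝ)) (r := r) hr.ne'
  have h1 : ∫⁻ x, f x ∂(Measure.map (r • ·) (volume : Measure (Fin q → ℝ)))
      = ∫⁻ v, f (r • v) := lintegral_map hf (measurable_const_smul r)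
  rw [hmap] at h1
  rw [← h1, lintegral_smul_measure]
  congr 2
  rw [Module.finrank_fintype_fun_eq_card, Fintype.card_fin, abs_of_nonneg
    (by positivity)]

lemma inner_scaling (q : ℕ) (μ : ℝ) (c : ℝ) :
    ∫⁻ z : Fin q → ℝ, posRpow (c - ∑ i, z i ^ 2) μ = posRpow c (μ + q / 2) * ballL q μ := by
  rcases le_or_gt c 0 with hc | hc
  · rw [posRpow_of_nonpos hc, zero_mul]
    have : ∀ z : Fin q → ℝ, posRpow (c - ∑ i, z i ^ 2) μ = 0 := fun z =>
      posRpow_of_nonpos (by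
        have : (0:ℝ) ≤ ∑ i, z i ^ 2 := Finset.sum_nonneg fun i _ => sq_nonneg _
        linarith) μ
    simp [this]
  · set s : ℝ := Real.sqrt c with hs
    have hspos : 0 < s := Real.sqrt_pos.2 hc
    set f : (Fin q → ℝ) → ℝ≥0∞ := fun z => posRpow (c - ∑ i, z i ^ 2) μ with hfdef
    have hfm : Measurable f := measurable_posRpow (measurable_const.sub measurable_sumsq) μ
    have hscale := lintegral_comp_smul_pi f hfm hspos
    have hfs : ∀ v : Fin q → ℝ, f (s • v)
        = ENNReal.ofReal (c ^ μ) * posRpow (1 - ∑ i, v i ^ 2) μ := by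
      intro v
      have h2 : c - ∑ i, (s • v) i ^ 2 = c * (1 - ∑ i, v i ^ 2) := by
        have : ∑ i, (s • v) i ^ 2 = s ^ 2 * ∑ i, v i ^ 2 := by
          rw [Finset.mul_sum]
          exact Finset.sum_congr rfl fun i _ => by
            simp [Pi.smul_apply, smul_eq_mul]; ring
        rw [this, Real.sq_sqrt hc.le]; ring
      rw [hfdef]; simp only []
      rw [h2, posRpow_mul_left hc]
    have h3 : ∫⁻ v : Fin q → ℝ, f (s • v)
        = ENNReal.ofReal (c ^ μ) * ballL q μ := by
      simp_rw [hfs]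
      rw [lintegral_const_mul _ (f := fun v : Fin q → ℝ => posRpow (1 - ∑ i, v i ^ 2) μ)
        (measurable_posRpow (measurable_const.sub measurable_sumsq) μ)]
      rfl
    have hsq : (s : ℝ) ^ q = c ^ ((q : ℝ) / 2) := by
      rw [hs, Real.sqrt_eq_rpow, ← Real.rpow_natCast (c ^ ((1:ℝ)/2)) q,
        ← Real.rpow_mul hc.le]
      congr 1
      ring
    have hkey : ENNReal.ofReal ((s ^ q)⁻¹) * ∫⁻ x, f x
        = ENNReal.ofReal (c ^ μ) * ballL q μ := by rw [← hscale, h3]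
    have hne : (s : ℝ) ^ q ≠ 0 := (pow_pos hspos q).ne'
    have h4 : (∫⁻ x, f x)
        = ENNReal.ofReal (s ^ q) * (ENNReal.ofReal (c ^ μ) * ballL q μ) := by
      rw [← hkey, ← mul_assoc, ← ENNReal.ofReal_mul (by positivity),
        mul_inv_cancel₀ hne, ENNReal.ofReal_one, one_mul]
    rw [h4, posRpow_of_pos hc, hsq, ← mul_assoc, ← ENNReal.ofReal_mul
      (Real.rpow_nonneg hc.le _), ← Real.rpow_add hc]
    ring_nf

/-! ### Product splitting -/

/-- The measurable equivalence `(Fin r → ℝ) × (Fin q → ℝ) ≃ᵐ (Fin (r+q) → ℝ)`. -/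
def splitEquiv (r q : ℕ) : ((Fin r → ℝ) × (Fin q → ℝ)) ≃ᵐ (Fin (r + q) → ℝ) :=
  (MeasurableEquiv.sumPiEquivProdPi (fun _ : Fin r ⊕ Fin q => ℝ)).symm.trans
    (MeasurableEquiv.piCongrLeft (fun _ => ℝ) finSumFinEquiv)

lemma splitEquiv_measurePreserving (r q : ℕ) :
    MeasurePreserving (splitEquiv r q) volume volume :=
  (volume_measurePreserving_piCongrLeft (fun _ => ℝ) finSumFinEquiv).comp
    (volume_measurePreserving_sumPiEquivProdPi_symm (fun _ : Fin r ⊕ Fin q => ℝ))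

lemma splitEquiv_apply (r q : ℕ) (y : Fin r → ℝ) (z : Fin q → ℝ) :
    splitEquiv r q (y, z) = Fin.append y z := by
  funext i
  refine Fin.addCases (fun l => ?_) (fun l => ?_) i
  · rw [Fin.append_left]
    show MeasurableEquiv.piCongrLeft (fun _ => ℝ) finSumFinEquiv _ _ = _
    rw [← finSumFinEquiv_apply_left l]
    rw [MeasurableEquiv.coe_piCongrLeft]
    rw [Equiv.piCongrLeft_apply_apply]
    rfl
  · rw [Fin.append_right]
    show MeasurableEquiv.piCongrLeft (fun _ => ℝ) finSumFinEquiv _ _ = _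
    rw [← finSumFinEquiv_apply_right l]
    rw [MeasurableEquiv.coe_piCongrLeft]
    rw [Equiv.piCongrLeft_apply_apply]
    rfl

lemma lintegral_split (r q : ℕ) (F : (Fin (r + q) → ℝ) → ℝ≥0∞) (hF : Measurable F) :
    ∫⁻ x : Fin (r + q) → ℝ, F x
      = ∫⁻ y : Fin r → ℝ, ∫⁻ z : Fin q → ℝ, F (Fin.append y z) := by
  rw [← (splitEquiv_measurePreserving r q).lintegral_comp hF]
  rw [Measure.volume_eq_prod]
  rw [lintegral_prod (fun a => F (splitEquiv r q a))
    ((hF.comp (splitEquiv r q).measurable).aemeasurable)]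
  simp_rw [splitEquiv_apply]

/-! ### The generic key lemma -/

lemma genkey (r q : ℕ) (μ : ℝ) (c : (Fin r → ℝ) → ℝ) (hc : Measurable c)
    (w : (Fin r → ℝ) → ℝ≥0∞) (hw : Measurable w) :
    ∫⁻ y : Fin r → ℝ, ∫⁻ z : Fin q → ℝ, w y * posRpow (c y - ∑ i, z i ^ 2) μ
      = (∫⁻ y : Fin r → ℝ, w y * posRpow (c y) (μ + q / 2)) * ballL q μ := by
  have h1 : ∀ y : Fin r → ℝ,
      (∫⁻ z : Fin q → ℝ, w y * posRpow (c y - ∑ i, z i ^ 2) μ)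
        = w y * posRpow (c y) (μ + q / 2) * ballL q μ := by
    intro y
    rw [lintegral_const_mul _ (f := fun z : Fin q → ℝ => posRpow (c y - ∑ i, z i ^ 2) μ)
        (measurable_posRpow (measurable_const.sub measurable_sumsq) μ),
      inner_scaling, ← mul_assoc]
  simp_rw [h1]
  rw [lintegral_mul_const _ (f := fun y => w y * posRpow (c y) (μ + q / 2)) (hw.mul (measurable_posRpow hc _))]

/-! ### Splitting of `Qform` and the sum of squares -/

lemma qform_append {r q : ℕ} (hr : 0 < r) (y : Fin r → ℝ) (z : Fin q → ℝ) :
    Qform (Fin.append y z) = Qform y - ∑ i, z i ^ 2 := by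
  unfold Qform
  rw [Fin.sum_univ_add]
  have h1 : ∀ i : Fin r,
      (if ((Fin.castAdd q i : Fin (r + q)) : ℕ) = 0 then (1:ℝ) else -1) *
        Fin.append y z (Fin.castAdd q i) ^ 2
      = (if (i : ℕ) = 0 then (1:ℝ) else -1) * y i ^ 2 := by
    intro i; rw [Fin.append_left, Fin.coe_castAdd]
  have h2 : ∀ i : Fin q,
      (if ((Fin.natAdd r i : Fin (r + q)) : ℕ) = 0 then (1:ℝ) else -1) *
        Fin.append y z (Fin.natAdd r i) ^ 2 = -(z i ^ 2) := by
    intro i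
    rw [Fin.append_right, Fin.coe_natAdd, if_neg (by omega)]
    ring
  rw [Finset.sum_congr rfl fun i _ => h1 i, Finset.sum_congr rfl fun i _ => h2 i,
    Finset.sum_neg_distrib]
  ring

lemma sumsq_append {r q : ℕ} (y : Fin r → ℝ) (z : Fin q → ℝ) :
    ∑ i, Fin.append y z i ^ 2 = (∑ i, y i ^ 2) + ∑ i, z i ^ 2 := by
  rw [Fin.sum_univ_add]
  congr 1
  · exact Finset.sum_congr rfl fun i _ => by rw [Fin.append_left]
  · exact Finset.sum_congr rfl fun i _ => by rw [Fin.append_right]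

lemma gweight_append {r q : ℕ} (hr : 0 < r) (y : Fin r → ℝ) (z : Fin q → ℝ) :
    gweight (Fin.append y z) = gweight y := by
  have h0 : (⟨0, by omega⟩ : Fin (r + q)) = Fin.castAdd q ⟨0, hr⟩ := rfl
  simp only [gweight, dif_pos hr, dif_pos (show 0 < r + q by omega)]
  rw [h0, Fin.append_left]

/-! ### Key factorizations -/

lemma gammaKey (r q : ℕ) (hr : 0 < r) (μ : ℝ) :
    ∫⁻ x : Fin (r + q) → ℝ, gweight x * posRpow (Qform x) μ
      = (∫⁻ y : Fin r → ℝ, gweight y * posRpow (Qform y) (μ + q / 2)) * ballL q μ := by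
  rw [lintegral_split r q (fun x => gweight x * posRpow (Qform x) μ) (measurable_gweight.mul (measurable_posRpow measurable_qform μ))]
  have : ∀ (y : Fin r → ℝ) (z : Fin q → ℝ),
      gweight (Fin.append y z) * posRpow (Qform (Fin.append y z)) μ
        = gweight y * posRpow (Qform y - ∑ i, z i ^ 2) μ := by
    intro y z; rw [gweight_append hr, qform_append hr]
  simp_rw [this]
  exact genkey r q μ Qform measurable_qform gweight measurable_gweight

lemma ballKey (r q : ℕ) (μ : ℝ) :
    ballL (r + q) μ = ballL r (μ + q / 2) * ballL q μ := by
  show (∫⁻ v : Fin (r + q) → ℝ, posRpow (1 - ∑ i, v i ^ 2) μ) = _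
  rw [lintegral_split r q (fun v => posRpow (1 - ∑ i, v i ^ 2) μ) (measurable_posRpow (measurable_const.sub measurable_sumsq) μ)]
  have : ∀ (y : Fin r → ℝ) (z : Fin q → ℝ),
      posRpow (1 - ∑ i, Fin.append y z i ^ 2) μ
        = (1 : ℝ≥0∞) * posRpow ((1 - ∑ i, y i ^ 2) - ∑ i, z i ^ 2) μ := by
    intro y z; rw [sumsq_append, one_mul]; ring_nf
  simp_rw [this]
  rw [genkey r q μ (fun y => 1 - ∑ i, y i ^ 2) (measurable_const.sub measurable_sumsq)
    (fun _ => 1) measurable_const]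
  simp [ballL]

/-! ### One-dimensional reductions -/

lemma lintegral_fin_one (H : ℝ → ℝ≥0∞) (hH : Measurable H) :
    ∫⁻ y : Fin 1 → ℝ, H (y 0) = ∫⁻ t : ℝ, H t := by
  have := (volume_preserving_funUnique (Fin 1) ℝ).lintegral_comp hH
  rw [← this]
  rfl

lemma lintegral_ofReal_lt_top_of_integrableOn {f : ℝ → ℝ} {s : Set ℝ}
    (hf : IntegrableOn f s volume) :
    ∫⁻ x in s, ENNReal.ofReal (f x) < ⊤ := by
  refine lt_of_le_of_lt ?_ hf.2
  exact lintegral_ofReal_le_lintegral_enorm f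

lemma gamma_one (ν : ℝ) (hν : -(1:ℝ)/2 < ν) :
    ∫⁻ y : Fin 1 → ℝ, gweight y * posRpow (Qform y) ν < ⊤ := by
  set H : ℝ → ℝ≥0∞ := fun t =>
    (if 0 < t then ENNReal.ofReal (Real.exp (-2 * t)) else 0) * posRpow (t ^ 2) ν with hH
  have hHm : Measurable H := by
    refine Measurable.mul ?_ (measurable_posRpow (by measurability) ν)
    refine Measurable.ite (measurableSet_lt measurable_const measurable_id) ?_ measurable_const
    exact ENNReal.measurable_ofReal.comp
      (Real.measurable_exp.comp (measurable_id.const_mul (-2)))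
  have hint : (fun y : Fin 1 → ℝ => gweight y * posRpow (Qform y) ν) = fun y => H (y 0) := by
    funext y
    have hq : Qform y = y 0 ^ 2 := by
      simp [Qform, Fin.sum_univ_one]
    have hw : gweight y = if 0 < y 0 then ENNReal.ofReal (Real.exp (-2 * y 0)) else 0 := by
      rw [gweight, dif_pos Nat.one_pos]
      rfl
    rw [hq, hw, hH]
  rw [show (∫⁻ y : Fin 1 → ℝ, gweight y * posRpow (Qform y) ν)
      = ∫⁻ y : Fin 1 → ℝ, H (y 0) from by rw [← hint], lintegral_fin_one H hHm]
  have hbound : ∀ t : ℝ, H t ≤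
      (Set.Ioi (0:ℝ)).indicator (fun t => ENNReal.ofReal (Real.exp (-t) * t ^ (2 * ν))) t := by
    intro t
    by_cases ht : 0 < t
    · rw [hH]
      simp only [if_pos ht]
      rw [posRpow_of_pos (by positivity), Set.indicator_of_mem (Set.mem_Ioi.2 ht),
        ← ENNReal.ofReal_mul (Real.exp_nonneg _)]
      refine ENNReal.ofReal_le_ofReal ?_
      have h1 : (t ^ 2 : ℝ) ^ ν = t ^ (2 * ν) := by
        rw [← Real.rpow_natCast t 2, ← Real.rpow_mul ht.le]
        norm_num
      rw [h1]
      have h2 : Real.exp (-2 * t) ≤ Real.exp (-t) := by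
        apply Real.exp_le_exp.2; linarith
      exact mul_le_mul_of_nonneg_right h2 (Real.rpow_nonneg ht.le _)
    · rw [hH]; simp only [if_neg ht, zero_mul]; exact zero_le
  refine lt_of_le_of_lt (lintegral_mono hbound) ?_
  rw [lintegral_indicator measurableSet_Ioi]
  apply lintegral_ofReal_lt_top_of_integrableOn
  have := Real.GammaIntegral_convergent (s := 2 * ν + 1) (by linarith)
  simpa using this

lemma ball_one (a : ℝ) (ha : -1 < a) : ballL 1 a < ⊤ := by
  have hint : ballL 1 a = ∫⁻ t : ℝ, posRpow (1 - t ^ 2) a := by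
    rw [ballL]
    have : (fun y : Fin 1 → ℝ => posRpow (1 - ∑ i, y i ^ 2) a)
        = fun y => posRpow (1 - y 0 ^ 2) a := by
      funext y; rw [Fin.sum_univ_one]
    rw [this, lintegral_fin_one (fun t => posRpow (1 - t ^ 2) a)
      (measurable_posRpow (by measurability) a)]
  rw [hint]
  rcases le_or_gt 0 a with ha0 | ha0
  · -- bounded case
    have hbound : ∀ t : ℝ, posRpow (1 - t ^ 2) a ≤
        (Set.Ioo (-1:ℝ) 1).indicator (fun _ => 1) t := by
      intro t
      by_cases h : 0 < 1 - t ^ 2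
      · have hmem : t ∈ Set.Ioo (-1:ℝ) 1 := ⟨by nlinarith, by nlinarith⟩
        rw [posRpow_of_pos h, Set.indicator_of_mem hmem]
        exact ENNReal.ofReal_le_one.2
          (Real.rpow_le_one (by linarith) (by nlinarith [sq_nonneg t]) ha0)
      · rw [posRpow_of_nonpos (not_lt.1 h)]; exact zero_le
    refine lt_of_le_of_lt (lintegral_mono hbound) ?_
    rw [lintegral_indicator measurableSet_Ioo, setLIntegral_const]
    simp [Real.volume_Ioo]
  · -- singular case
    set g : ℝ → ℝ≥0∞ := (Set.Ioo (0:ℝ) 2).indicator (fun s => ENNReal.ofReal (s ^ a)) with hg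
    have hgm : Measurable g :=
      Measurable.indicator (ENNReal.measurable_ofReal.comp (by measurability)) measurableSet_Ioo
    have hbound : ∀ t : ℝ, posRpow (1 - t ^ 2) a ≤ g (1 - t) + g (1 + t) := by
      intro t
      by_cases h : 0 < 1 - t ^ 2
      · have ht1 : -1 < t := by nlinarith
        have ht2 : t < 1 := by nlinarith
        rcases le_or_gt 0 t with htt | htt
        · have hmem : (1 - t) ∈ Set.Ioo (0:ℝ) 2 := ⟨by linarith, by linarith⟩
          have hle : (1 - t ^ 2 : ℝ) ^ a ≤ (1 - t) ^ a :=
            Real.rpow_le_rpow_of_nonpos (by linarith) (by nlinarith) ha0.le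
          calc posRpow (1 - t ^ 2) a = ENNReal.ofReal ((1 - t ^ 2) ^ a) := posRpow_of_pos h a
            _ ≤ ENNReal.ofReal ((1 - t) ^ a) := ENNReal.ofReal_le_ofReal hle
            _ = g (1 - t) := by rw [hg, Set.indicator_of_mem hmem]
            _ ≤ g (1 - t) + g (1 + t) := le_self_add
        · have hmem : (1 + t) ∈ Set.Ioo (0:ℝ) 2 := ⟨by linarith, by linarith⟩
          have hle : (1 - t ^ 2 : ℝ) ^ a ≤ (1 + t) ^ a :=
            Real.rpow_le_rpow_of_nonpos (by linarith) (by nlinarith) ha0.le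
          calc posRpow (1 - t ^ 2) a = ENNReal.ofReal ((1 - t ^ 2) ^ a) := posRpow_of_pos h a
            _ ≤ ENNReal.ofReal ((1 + t) ^ a) := ENNReal.ofReal_le_ofReal hle
            _ = g (1 + t) := by rw [hg, Set.indicator_of_mem hmem]
            _ ≤ g (1 - t) + g (1 + t) := le_add_self
      · rw [posRpow_of_nonpos (not_lt.1 h)]; exact zero_le
    refine lt_of_le_of_lt (lintegral_mono hbound) ?_
    have hgfin : (∫⁻ s : ℝ, g s) < ⊤ := by
      rw [hg, lintegral_indicator measurableSet_Ioo]
      apply lintegral_ofReal_lt_top_of_integrableOn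
      have h1 : IntervalIntegrable (fun x : ℝ => x ^ a) volume 0 2 :=
        intervalIntegral.intervalIntegrable_rpow' ha
      exact ((intervalIntegrable_iff_integrableOn_Ioo_of_le (by norm_num)).1 h1)
    have hadd : ∫⁻ t : ℝ, (g (1 - t) + g (1 + t))
        = (∫⁻ t : ℝ, g (1 - t)) + ∫⁻ t : ℝ, g (1 + t) :=
      lintegral_add_left (hgm.comp (measurable_const.sub measurable_id)) _
    have hmp1 : MeasurePreserving (fun t : ℝ => 1 - t) volume volume :=
      Measure.measurePreserving_sub_left volume 1
    have hmp2 : MeasurePreserving (fun t : ℝ => 1 + t) volume volume :=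
      measurePreserving_add_left volume 1
    have e1 : (∫⁻ t : ℝ, g (1 - t)) = ∫⁻ s : ℝ, g s := hmp1.lintegral_comp hgm
    have e2 : (∫⁻ t : ℝ, g (1 + t)) = ∫⁻ s : ℝ, g s := hmp2.lintegral_comp hgm
    rw [hadd, e1, e2]
    exact ENNReal.add_lt_top.2 ⟨hgfin, hgfin⟩

/-! ### Finiteness of the ball integral -/

lemma ball_fin (q : ℕ) (μ : ℝ) (hμ : -1 < μ) : ballL q μ < ⊤ := by
  induction q generalizing μ with
  | zero =>
      have : ballL 0 μ = posRpow 1 μ * volume (Set.univ : Set (Fin 0 → ℝ)) := by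
        rw [ballL]
        simp [lintegral_const]
      rw [this, posRpow_of_pos one_pos, Real.one_rpow]
      simp
  | succ q ih =>
      have hcast : ballL (q + 1) μ = ballL (1 + q) μ := by rw [Nat.add_comm]
      rw [hcast, ballKey 1 q μ]
      exact ENNReal.mul_lt_top (ball_one _ (by
        have h0 : (0:ℝ) ≤ (q:ℝ)/2 := by positivity
        linarith)) (ih μ hμ)

/-! ### Finiteness of the Gamma integral -/

lemma gamma_fin (m : ℕ) (hm : 2 ≤ m) (ν : ℝ) (hν : -1 < ν) (hν2 : 0 < ν + (m : ℝ) / 2) :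
    ∫⁻ x : Fin m → ℝ, gweight x * posRpow (Qform x) ν < ⊤ := by
  obtain ⟨q, rfl⟩ : ∃ q, m = 1 + q := ⟨m - 1, by omega⟩
  rw [gammaKey 1 q (by omega) ν]
  refine ENNReal.mul_lt_top (gamma_one _ ?_) (ball_fin q ν hν)
  have hq : 1 ≤ q := by omega
  push_cast at hν2 ⊢
  have : (1:ℝ) ≤ q := by exact_mod_cast hq
  linarith

/-! ### Relating restricted integrals to global ones -/

lemma coneΩ_measurableSet (m : ℕ) : MeasurableSet (coneΩ m) := by
  have h1 : MeasurableSet {x : Fin m → ℝ | 0 < Qform x} :=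
    measurableSet_lt measurable_const measurable_qform
  have h2 : MeasurableSet {x : Fin m → ℝ | ∀ i : Fin m, (i : ℕ) = 0 → 0 < x i} := by
    have : {x : Fin m → ℝ | ∀ i : Fin m, (i : ℕ) = 0 → 0 < x i}
        = ⋂ i : Fin m, {x | (i : ℕ) = 0 → 0 < x i} := by
      ext x; simp [Set.mem_iInter]
    rw [this]
    refine MeasurableSet.iInter fun i => ?_
    by_cases hi : (i : ℕ) = 0
    · have : {x : Fin m → ℝ | (i : ℕ) = 0 → 0 < x i} = {x | 0 < x i} := by
        ext x; simp [hi]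
      rw [this]; exact measurableSet_lt measurable_const (measurable_pi_apply i)
    · have : {x : Fin m → ℝ | (i : ℕ) = 0 → 0 < x i} = Set.univ := by
        ext x; simp [hi]
      rw [this]; exact MeasurableSet.univ
  exact h1.inter h2

lemma cone_eq (m : ℕ) (hm : 0 < m) (ν : ℝ) :
    ∫⁻ x in coneΩ m,
        ENNReal.ofReal (Real.exp (-2 * x ⟨0, hm⟩) * Qform x ^ ν)
      = ∫⁻ x : Fin m → ℝ, gweight x * posRpow (Qform x) ν := by
  rw [← lintegral_indicator (coneΩ_measurableSet m)]
  congr 1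
  funext x
  by_cases hx : x ∈ coneΩ m
  · rw [Set.indicator_of_mem hx]
    obtain ⟨hQ, hpos⟩ := hx
    have h0 : 0 < x ⟨0, hm⟩ := hpos ⟨0, hm⟩ rfl
    rw [gweight, dif_pos hm, if_pos h0, posRpow_of_pos hQ,
      ← ENNReal.ofReal_mul (Real.exp_nonneg _)]
  · rw [Set.indicator_of_notMem hx]
    rw [coneΩ, Set.mem_setOf_eq, not_and_or] at hx
    rcases hx with hQ | hpos
    · rw [posRpow_of_nonpos (not_lt.1 hQ), mul_zero]
    · push_neg at hpos
      obtain ⟨i, hi0, hineg⟩ := hpos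
      have hieq : i = ⟨0, hm⟩ := Fin.ext hi0
      rw [gweight, dif_pos hm, if_neg (hieq ▸ not_lt.2 hineg), zero_mul]

lemma ballB_measurableSet (q : ℕ) : MeasurableSet (ballB q) :=
  measurableSet_lt measurable_sumsq measurable_const

lemma ballB_eq (q : ℕ) (μ : ℝ) :
    ∫⁻ v in ballB q, ENNReal.ofReal ((1 - ∑ i, v i ^ 2) ^ μ) = ballL q μ := by
  rw [ballL, ← lintegral_indicator (ballB_measurableSet q)]
  congr 1
  funext v
  by_cases hv : v ∈ ballB q
  · rw [Set.indicator_of_mem hv, posRpow_of_pos (by simpa [ballB, sub_pos] using hv)]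
  · rw [Set.indicator_of_notMem hv, posRpow_of_nonpos]
    rw [ballB, Set.mem_setOf_eq, not_lt] at hv
    linarith

/-! ### Main theorem -/

/-- Factorization of the Gindikin Gamma integral of the Lorentz cone through
the stratification. -/
theorem stmt12 (n p : ℕ) (hn : 3 ≤ n) (hp : 1 ≤ p) (hpn : p ≤ n - 2) (lam : ℝ)
    (hlam : ((n : ℝ) - 2) / 2 < lam) :
    (∫⁻ x in coneΩ n,
        ENNReal.ofReal (Real.exp (-2 * x ⟨0, by omega⟩) * Qform x ^ (lam - (n : ℝ) / 2))
        ∂volume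
      = (∫⁻ v in ballB p,
            ENNReal.ofReal ((1 - ∑ i, v i ^ 2) ^ (lam - (n : ℝ) / 2)) ∂volume) *
          ∫⁻ y in coneΩ (n - p),
            ENNReal.ofReal (Real.exp (-2 * y ⟨0, by omega⟩) *
              Qform y ^ (lam - ((n : ℝ) - (p : ℝ)) / 2)) ∂volume) ∧
    (∫⁻ x in coneΩ n,
        ENNReal.ofReal (Real.exp (-2 * x ⟨0, by omega⟩) * Qform x ^ (lam - (n : ℝ) / 2))
        ∂volume) < ⊤ ∧
    (∫⁻ v in ballB p,
        ENNReal.ofReal ((1 - ∑ i, v i ^ 2) ^ (lam - (n : ℝ) / 2)) ∂volume) < ⊤ ∧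
    (∫⁻ y in coneΩ (n - p),
        ENNReal.ofReal (Real.exp (-2 * y ⟨0, by omega⟩) *
          Qform y ^ (lam - ((n : ℝ) - (p : ℝ)) / 2)) ∂volume) < ⊤ := by
  obtain ⟨r, hr2, rfl⟩ : ∃ r, 2 ≤ r ∧ n = r + p := ⟨n - p, by omega, by omega⟩
  have hrpos : 0 < r + p := by omega
  have hrpos' : 0 < r := by omega
  rw [cone_eq (r + p) hrpos, cone_eq (r + p - p) (by omega), ballB_eq]
  have key3 : ∫⁻ y : Fin (r + p - p) → ℝ,
      gweight y * posRpow (Qform y) (lam - (((r + p : ℕ) : ℝ) - (p : ℝ)) / 2)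
      = ∫⁻ y : Fin r → ℝ,
          gweight y * posRpow (Qform y) (lam - (((r + p : ℕ) : ℝ) - (p : ℝ)) / 2) := by
    rw [Nat.add_sub_cancel]
  rw [key3]
  rw [gammaKey r p hrpos' (lam - ((r + p : ℕ) : ℝ) / 2)]
  have hexp : lam - ((r + p : ℕ) : ℝ) / 2 + (p : ℝ) / 2
      = lam - (((r + p : ℕ) : ℝ) - (p : ℝ)) / 2 := by push_cast; ring
  rw [hexp]
  have hp1 : (1:ℝ) ≤ (p : ℝ) := by exact_mod_cast hp
  have hr1 : (2:ℝ) ≤ (r : ℝ) := by exact_mod_cast hr2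
  have hlam' : ((r : ℝ) + (p : ℝ) - 2) / 2 < lam := by push_cast at hlam; linarith
  have hν₁ : -1 < lam - ((r + p : ℕ) : ℝ) / 2 := by push_cast; linarith
  have hν₃ : -1 < lam - (((r + p : ℕ) : ℝ) - (p : ℝ)) / 2 := by push_cast; linarith
  have hν₃2 : 0 < lam - (((r + p : ℕ) : ℝ) - (p : ℝ)) / 2 + (r : ℝ) / 2 := by
    push_cast; linarith
  have hgfin : ∫⁻ y : Fin r → ℝ,
      gweight y * posRpow (Qform y) (lam - (((r + p : ℕ) : ℝ) - (p : ℝ)) / 2) < ⊤ :=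
    gamma_fin r hr2 _ hν₃ hν₃2
  have hbfin : ballL p (lam - ((r + p : ℕ) : ℝ) / 2) < ⊤ := ball_fin p _ hν₁
  exact ⟨mul_comm _ _, ENNReal.mul_lt_top hgfin hbfin, hbfin, hgfin⟩
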